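/- For every B > 0 there exists K₀ = K₀(B) > 0 such that for every μ ∈ (0,1) and every C ≥ 3μ + K₀·(1−μ)^{2/3} the following holds for any solution (U,V) of the scaled Levi-Civita system and any time τ*: if |U(τ*)| ≤ B and |V(τ*)| ≤ B, and at τ* one has U·U̇ + V·V̇ = 0, U·Ü + U̇² + V·V̈ + V̇² > 0 (a nondegenerate local minimum of the squared distance U²+V² to the origin), and the angular momentum M = U·V̇ − V·U̇ vanishes, then U(τ*) = V(τ*) = 0. Conversely, if U(τ*) = V(τ*) = 0 and U̇(τ*)² + V̇(τ*)² > 0, then all three conditions hold at τ*. -/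

import Mathlib

open Real Set

set_option maxHeartbeats 1000000

noncomputable section

/-- The function `R₂` appearing in the scaled Levi-Civita system. -/
def R2 (μ C U V : ℝ) : ℝ :=
  Real.sqrt (1 + 4*(1-μ)*(U^2-V^2)/(C-3*μ) + 4*(1-μ)^2*(U^2+V^2)^2/(C-3*μ)^2)

/-- `(U,V)` is a solution of the scaled Levi-Civita system of the planar circular
restricted three-body problem with mass parameter `μ` and Jacobi constant `C`. -/
def IsLCSol (μ C : ℝ) (U V : ℝ → ℝ) : Prop :=
  (∀ τ : ℝ, DifferentiableAt ℝ U τ ∧ DifferentiableAt ℝ V τ ∧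
      DifferentiableAt ℝ (deriv U) τ ∧ DifferentiableAt ℝ (deriv V) τ) ∧
  (∀ τ : ℝ,
    deriv (deriv U) τ =
      -((C-μ)/(C-3*μ)) * U τ
      + 8*(1-μ)*((U τ)^2+(V τ)^2)*(deriv V τ)/Real.sqrt ((C-3*μ)^3)
      + 12*(1-μ)^2*((U τ)^2+(V τ)^2)^2*(U τ)/(C-3*μ)^3
      + 8*μ*(1-μ)*(U τ)^3/(C-3*μ)^2
      + 2*μ*(U τ)/((C-3*μ)*R2 μ C (U τ) (V τ))
      - 4*μ*(1-μ)*(U τ)*((U τ)^2+(V τ)^2)*(2*(1-μ)*((U τ)^2+(V τ)^2)+(C-3*μ))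
          /((C-3*μ)^3*(R2 μ C (U τ) (V τ))^3)) ∧
  (∀ τ : ℝ,
    deriv (deriv V) τ =
      -((C-μ)/(C-3*μ)) * V τ
      - 8*(1-μ)*((U τ)^2+(V τ)^2)*(deriv U τ)/Real.sqrt ((C-3*μ)^3)
      + 12*(1-μ)^2*((U τ)^2+(V τ)^2)^2*(V τ)/(C-3*μ)^3
      - 8*μ*(1-μ)*(V τ)^3/(C-3*μ)^2
      + 2*μ*(V τ)/((C-3*μ)*R2 μ C (U τ) (V τ))
      - 4*μ*(1-μ)*(V τ)*((U τ)^2+(V τ)^2)*(2*(1-μ)*((U τ)^2+(V τ)^2)-(C-3*μ))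
          /((C-3*μ)^3*(R2 μ C (U τ) (V τ))^3))

lemma lemA (x y R : ℝ) (hxl : -y ≤ x) (hxu : x ≤ y) (hy : y ≤ 1/8)
    (hR0 : 0 ≤ R) (hR2 : R^2 = 1+4*x+4*y^2) :
    -1 + 4*x + 1/R - (2*x+4*y^2)/R^3 ≤ 24*y^2 := by
  have hy0 : 0 ≤ y := by linarith
  have hR2pos : (1:ℝ)/2 ≤ R^2 := by rw [hR2]; nlinarith [sq_nonneg y]
  have hRl : (7:ℝ)/10 ≤ R := by nlinarith [hR2pos, hR0]
  have hRpos : 0 < R := by linarith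
  have hx2 : x^2 ≤ y^2 := sq_le_sq' hxl hxu
  have hsum : 0 < 1+2*x+R := by linarith
  have h12x : 0 ≤ 1+2*x := by linarith
  have hR1 : 1+2*x ≤ R := by nlinarith [hsum, hx2, hR2]
  have hP1 : (1:ℝ) ≤ (1+4*x+4*y^2)*(1-4*x+24*y^2) := by
    nlinarith [hx2, mul_nonneg (mul_nonneg hy0 hy0) (by linarith : (0:ℝ) ≤ x+y),
      mul_nonneg (mul_nonneg hy0 hy0) (by linarith : (0:ℝ) ≤ 1/8-y),
      sq_nonneg y, mul_nonneg (mul_nonneg hy0 hy0) (mul_nonneg hy0 hy0)]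
  have hnum : 1+2*x ≤ R^3*(1-4*x+24*y^2) := by
    have e1 : R^3*(1-4*x+24*y^2) = R*((1+4*x+4*y^2)*(1-4*x+24*y^2)) := by
      rw [← hR2]; ring
    rw [e1]
    nlinarith [hR1, hP1, hRpos, h12x]
  have hR3 : (0:ℝ) < R^3 := by positivity
  have e2 : -1 + 4*x + 1/R - (2*x+4*y^2)/R^3 = ((-1+4*x)*R^3 + R^2 - (2*x+4*y^2))/R^3 := by
    field_simp
  rw [e2, div_le_iff₀ hR3, hR2]
  nlinarith [hnum]


lemma key (μ k u v R : ℝ) (hμ0 : 0 < μ) (hμ1 : μ < 1) (hk : 0 < k)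
    (hy8 : 8*(1-μ)*(u^2+v^2) ≤ k)
    (hkk : 60*((1-μ)*(u^2+v^2))^2 ≤ k^3)
    (hR0 : 0 ≤ R)
    (hR2 : R^2 = 1 + 4*(1-μ)*(u^2-v^2)/k + 4*(1-μ)^2*(u^2+v^2)^2/k^2) :
    u * (-((k+2*μ)/k) * u
      + 12*(1-μ)^2*(u^2+v^2)^2*u/k^3
      + 8*μ*(1-μ)*u^3/k^2
      + 2*μ*u/(k*R)
      - 4*μ*(1-μ)*u*(u^2+v^2)*(2*(1-μ)*(u^2+v^2)+k)/(k^3*R^3))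
    + v * (-((k+2*μ)/k) * v
      + 12*(1-μ)^2*(u^2+v^2)^2*v/k^3
      - 8*μ*(1-μ)*v^3/k^2
      + 2*μ*v/(k*R)
      - 4*μ*(1-μ)*v*(u^2+v^2)*(2*(1-μ)*(u^2+v^2)-k)/(k^3*R^3)) ≤ 0 := by
  have hε : 0 < 1-μ := by linarith
  set x : ℝ := (1-μ)*(u^2-v^2)/k with hxdef
  set y : ℝ := (1-μ)*(u^2+v^2)/k with hydef
  have hxu : x ≤ y := by
    rw [hxdef, hydef]
    apply div_le_div_of_nonneg_right ?_ hk.le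
    nlinarith [sq_nonneg v, hε]
  have hxl : -y ≤ x := by
    have h : (1-μ)*(-(u^2+v^2)) ≤ (1-μ)*(u^2-v^2) := by nlinarith [sq_nonneg u, hε]
    calc -y = (1-μ)*(-(u^2+v^2))/k := by rw [hydef]; ring
    _ ≤ x := by rw [hxdef]; exact div_le_div_of_nonneg_right h hk.le
  have hy18 : y ≤ 1/8 := by
    rw [hydef, div_le_iff₀ hk]; linarith
  have hy0 : 0 ≤ y := by
    rw [hydef]; positivity
  have hR2' : R^2 = 1 + 4*x + 4*y^2 := by rw [hR2, hxdef, hydef]; ring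
  have hRpos : 0 < R := by nlinarith [hR2', hxl, hy18, sq_nonneg y, hR0]
  have hG := lemA x y R hxl hxu hy18 hR0 hR2'
  have hyk : y*k = (1-μ)*(u^2+v^2) := by rw [hydef]; field_simp
  have h60 : 60*y^2 ≤ k := by
    have h1 : 60*(y*k)^2 ≤ k^3 := by rw [hyk]; exact hkk
    nlinarith [h1, mul_pos hk hk]
  set G : ℝ := -1 + 4*x + 1/R - (2*x+4*y^2)/R^3 with hGdef
  have hμle : 2*μ*G ≤ 48*y^2 := by
    have h2 : 2*μ*G ≤ 2*μ*(24*y^2) := mul_le_mul_of_nonneg_left hG (by linarith)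
    have h3 : 2*μ*(24*y^2) ≤ 48*y^2 := by nlinarith [sq_nonneg y]
    linarith
  have hT : -k + 12*y^2 + 2*μ*G ≤ 0 := by linarith
  have hSfact : u * (-((k+2*μ)/k) * u
      + 12*(1-μ)^2*(u^2+v^2)^2*u/k^3
      + 8*μ*(1-μ)*u^3/k^2
      + 2*μ*u/(k*R)
      - 4*μ*(1-μ)*u*(u^2+v^2)*(2*(1-μ)*(u^2+v^2)+k)/(k^3*R^3))
    + v * (-((k+2*μ)/k) * v
      + 12*(1-μ)^2*(u^2+v^2)^2*v/k^3
      - 8*μ*(1-μ)*v^3/k^2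
      + 2*μ*v/(k*R)
      - 4*μ*(1-μ)*v*(u^2+v^2)*(2*(1-μ)*(u^2+v^2)-k)/(k^3*R^3))
      = (u^2+v^2)/k * (-k + 12*y^2 + 2*μ*G) := by
    rw [hGdef, hxdef, hydef]
    field_simp
    ring
  rw [hSfact]
  have h0 : 0 ≤ (u^2+v^2)/k := by positivity
  exact mul_nonpos_iff.mpr (Or.inl ⟨h0, hT⟩)

/-- **Lemma (characterization of EC orbits)**: for `C` large enough (in the sense
`C ≥ 3μ + K₀(1−μ)^{2/3}`), at a nondegenerate local minimum of the squared distance to the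
origin at which the angular momentum `M = U V̇ − V U̇` vanishes, the solution is exactly at
the origin (collision); conversely, at a collision with nonzero velocity all three
conditions hold. The constant `K₀` can be chosen uniformly for solutions bounded by `B`. -/
theorem collision_characterization :
    ∀ B : ℝ, 0 < B → ∃ K₀ : ℝ, 0 < K₀ ∧ ∀ μ ∈ Set.Ioo (0:ℝ) 1,
      ∀ C : ℝ, 3*μ + K₀*(1-μ)^((2:ℝ)/3) ≤ C →
      ∀ U V : ℝ → ℝ, IsLCSol μ C U V → ∀ τ : ℝ,
        ((|U τ| ≤ B ∧ |V τ| ≤ B ∧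
            U τ * deriv U τ + V τ * deriv V τ = 0 ∧
            0 < U τ * deriv (deriv U) τ + (deriv U τ)^2
                + V τ * deriv (deriv V) τ + (deriv V τ)^2 ∧
            U τ * deriv V τ - V τ * deriv U τ = 0) →
          U τ = 0 ∧ V τ = 0) ∧
        ((U τ = 0 ∧ V τ = 0 ∧ 0 < (deriv U τ)^2 + (deriv V τ)^2) →
          (U τ * deriv U τ + V τ * deriv V τ = 0 ∧
            0 < U τ * deriv (deriv U) τ + (deriv U τ)^2
                + V τ * deriv (deriv V) τ + (deriv V τ)^2 ∧
            U τ * deriv V τ - V τ * deriv U τ = 0)) := by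
  intro B hB
  refine ⟨16*(1+B)^2, by positivity, ?_⟩
  intro μ hμ C hC U V hsol τ
  obtain ⟨hμ0, hμ1⟩ := hμ
  have hε : 0 < 1-μ := by linarith
  constructor
  · -- forward direction
    rintro ⟨hUB, hVB, h1, h2, h3⟩
    by_contra hne
    -- squared distance is positive
    have hs0 : 0 < (U τ)^2 + (V τ)^2 := by
      rcases not_and_or.mp hne with h | h
      · have hu2 : (U τ)^2 ≠ 0 := pow_ne_zero 2 h
        have := lt_of_le_of_ne (sq_nonneg (U τ)) (Ne.symm hu2)
        nlinarith [sq_nonneg (V τ)]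
      · have hv2 : (V τ)^2 ≠ 0 := pow_ne_zero 2 h
        have := lt_of_le_of_ne (sq_nonneg (V τ)) (Ne.symm hv2)
        nlinarith [sq_nonneg (U τ)]
    have hdu : deriv U τ = 0 := by
      have h4 : ((U τ)^2 + (V τ)^2) * deriv U τ = 0 := by
        linear_combination U τ * h1 - V τ * h3
      rcases mul_eq_zero.mp h4 with h | h
      · exact absurd h hs0.ne'
      · exact h
    have hdv : deriv V τ = 0 := by
      have h4 : ((U τ)^2 + (V τ)^2) * deriv V τ = 0 := by
        linear_combination V τ * h1 + U τ * h3
      rcases mul_eq_zero.mp h4 with h | h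
      · exact absurd h hs0.ne'
      · exact h
    -- constants
    have hP0 : 0 < (1-μ)^((2:ℝ)/3) := Real.rpow_pos_of_pos hε _
    have hk : 0 < C - 3*μ := by
      have : 0 < 16*(1+B)^2*(1-μ)^((2:ℝ)/3) := by positivity
      linarith
    have hkK : 16*(1+B)^2 * (1-μ)^((2:ℝ)/3) ≤ C - 3*μ := by linarith
    have hPe : 1-μ ≤ (1-μ)^((2:ℝ)/3) := by
      nth_rewrite 1 [← Real.rpow_one (1-μ)]
      exact Real.rpow_le_rpow_of_exponent_ge hε (by linarith) (by norm_num)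
    have hu2B : (U τ)^2 ≤ B^2 := by
      have := pow_le_pow_left₀ (abs_nonneg (U τ)) hUB 2
      rwa [sq_abs] at this
    have hv2B : (V τ)^2 ≤ B^2 := by
      have := pow_le_pow_left₀ (abs_nonneg (V τ)) hVB 2
      rwa [sq_abs] at this
    have hs2B : (U τ)^2 + (V τ)^2 ≤ 2*B^2 := by linarith
    have hy8 : 8*(1-μ)*((U τ)^2+(V τ)^2) ≤ C - 3*μ := by
      have h1' : 8*(1-μ)*((U τ)^2+(V τ)^2) ≤ 16*B^2*(1-μ) := by nlinarith [hε]
      have h2' : 16*B^2*(1-μ) ≤ 16*B^2*(1-μ)^((2:ℝ)/3) := by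
        apply mul_le_mul_of_nonneg_left hPe
        positivity
      have h3' : 16*B^2*(1-μ)^((2:ℝ)/3) ≤ 16*(1+B)^2*(1-μ)^((2:ℝ)/3) := by
        apply mul_le_mul_of_nonneg_right ?_ hP0.le
        nlinarith [hB]
      linarith
    have hkk : 60*((1-μ)*((U τ)^2+(V τ)^2))^2 ≤ (C-3*μ)^3 := by
      have hcube : ((1-μ)^((2:ℝ)/3))^(3:ℕ) = (1-μ)^2 := by
        rw [← Real.rpow_natCast ((1-μ)^((2:ℝ)/3)) 3, ← Real.rpow_mul hε.le]
        norm_num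
      have hc1 : (16*(1+B)^2 * (1-μ)^((2:ℝ)/3))^(3:ℕ) ≤ (C-3*μ)^3 :=
        pow_le_pow_left₀ (by positivity) hkK 3
      have hc2 : (16*(1+B)^2 * (1-μ)^((2:ℝ)/3))^(3:ℕ)
          = (16*(1+B)^2)^3 * (1-μ)^2 := by
        rw [mul_pow, hcube]
      have hK3 : 240*B^4 ≤ (16*(1+B)^2)^3 := by
        have e3 : (16*(1+B)^2)^3 = 4096*(1+B)^6 := by ring
        have h4 : B^4 ≤ (1+B)^4 := pow_le_pow_left₀ hB.le (by linarith) 4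
        have h46 : (1+B)^4 ≤ (1+B)^6 := pow_le_pow_right₀ (by linarith) (by norm_num)
        have h6pos : (0:ℝ) < (1+B)^6 := by positivity
        nlinarith [h4, h46, h6pos]
      have hes : ((1-μ)*((U τ)^2+(V τ)^2))^2 ≤ (1-μ)^2 * (4*B^4) := by
        have hss : ((U τ)^2+(V τ)^2)^2 ≤ 4*B^4 := by
          nlinarith [hs2B, sq_nonneg (U τ), sq_nonneg (V τ)]
        calc ((1-μ)*((U τ)^2+(V τ)^2))^2 = (1-μ)^2 * ((U τ)^2+(V τ)^2)^2 := by ring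
        _ ≤ (1-μ)^2 * (4*B^4) := by
            apply mul_le_mul_of_nonneg_left hss (by positivity)
      have he2 : (0:ℝ) ≤ (1-μ)^2 := by positivity
      nlinarith [hc1, hc2, hK3, hes, he2, mul_le_mul_of_nonneg_right hK3 he2]
    -- R2 bound
    have harg : 0 ≤ 1 + 4*(1-μ)*((U τ)^2-(V τ)^2)/(C-3*μ)
        + 4*(1-μ)^2*((U τ)^2+(V τ)^2)^2/(C-3*μ)^2 := by
      have hA : -(1:ℝ)/2 ≤ 4*(1-μ)*((U τ)^2-(V τ)^2)/(C-3*μ) := by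
        rw [le_div_iff₀ hk]
        nlinarith [mul_nonneg hε.le (sq_nonneg (U τ)), hy8]
      have hB' : (0:ℝ) ≤ 4*(1-μ)^2*((U τ)^2+(V τ)^2)^2/(C-3*μ)^2 := by positivity
      linarith
    have hR0 : 0 ≤ R2 μ C (U τ) (V τ) := Real.sqrt_nonneg _
    have hR2sq : (R2 μ C (U τ) (V τ))^2 = 1 + 4*(1-μ)*((U τ)^2-(V τ)^2)/(C-3*μ)
        + 4*(1-μ)^2*((U τ)^2+(V τ)^2)^2/(C-3*μ)^2 := Real.sq_sqrt harg
    have hkey := key μ (C-3*μ) (U τ) (V τ) (R2 μ C (U τ) (V τ))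
      hμ0 hμ1 hk hy8 hkk hR0 hR2sq
    rw [hsol.2.1 τ, hsol.2.2 τ, hdu, hdv] at h2
    have hCμ : C - μ = (C-3*μ) + 2*μ := by ring
    rw [hCμ] at h2
    ring_nf at h2 hkey
    linarith [hkey, h2]
  · -- converse direction
    rintro ⟨hU0, hV0, hvel⟩
    refine ⟨by rw [hU0, hV0]; ring, ?_, by rw [hU0, hV0]; ring⟩
    rw [hU0, hV0]
    ring_nf
    ring_nf at hvel
    linarith

end
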